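/- Assume: (S1) κ is a cardinal with cf(κ) > ω; (S2) 𝒯 = (T,⪯) is a well-founded partially ordered set with |T| ≤ κ; (S3) X is a topological space with |X| = κ; (S4) {X_t : t ∈ T} is a partition of X into pieces each of cardinality κ; and (S5) for each s ∈ T every point x ∈ X_s has a neighborhood U(x) such that U(x) \ {x} ⊆ ⋃{X_t : s ≺ t, t ∈ T}. Then X is left-separated and ord_ℓ(X) ≤ κ·rk(𝒯) (ordinal multiplication). -/

import Mathlib

universe u

open Cardinal Ordinal

/-- `o` is the order type of some left-separating well-ordering of `X`:
a well-ordering all of whose initial segments are closed. -/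
def IsLeftSepType (X : Type u) [TopologicalSpace X] (o : Ordinal.{u}) : Prop :=
  ∃ (r : X → X → Prop) (hwo : IsWellOrder X r),
    (∀ x : X, IsClosed {y | r y x}) ∧ o = @Ordinal.type X r hwo

/-- A space is left-separated if it admits a left-separating well-ordering. -/
def IsLeftSeparated (X : Type u) [TopologicalSpace X] : Prop :=
  ∃ o, IsLeftSepType X o

/-- The left-separating type of a space: the minimum of the order types of its
left-separating well-orderings. -/
noncomputable def ordL (X : Type u) [TopologicalSpace X] : Ordinal.{u} :=
  sInf {o | IsLeftSepType X o}

/-- The rank of a well-founded partial order: `rk(𝒯) = sup { rk_𝒯(t) + 1 : t ∈ T }`,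
where `rk_𝒯` is the usual well-founded rank function. -/
noncomputable def pordRank (T : Type u) [PartialOrder T] [WellFoundedLT T] : Ordinal.{u} :=
  ⨆ t : T, IsWellFounded.rank (α := T) (· < ·) t + 1

lemma myWO (α : Type*) [LinearOrder α] [WellFoundedLT α] : IsWellOrder α (· < ·) where
  trichotomous := fun a b h1 h2 => ((lt_trichotomy a b).resolve_left h1).resolve_right h2
  wf := wellFounded_lt

theorem stmt_6 (κ : Cardinal.{0}) (hcf : Cardinal.aleph0 < κ.ord.cof)
    (T : Type) [PartialOrder T] [WellFoundedLT T] (hT : #T ≤ κ)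
    (X : Type) [TopologicalSpace X] (hX : #X = κ)
    (P : T → Set X)
    (hdisj : ∀ s t : T, s ≠ t → Disjoint (P s) (P t))
    (hcov : (⋃ t, P t) = Set.univ)
    (hsize : ∀ t, #↥(P t) = κ)
    (hS5 : ∀ s : T, ∀ x ∈ P s, ∃ U ∈ nhds x, U \ {x} ⊆ ⋃ t ∈ {t : T | s < t}, P t) :
    IsLeftSeparated X ∧ ordL X ≤ κ.ord * pordRank T := by
  classical
  haveI := myWO κ.ord.ToType
  -- an enumeration of X of length κ.ord
  obtain ⟨e⟩ : Nonempty (X ≃ κ.ord.ToType) := by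
    rw [← Cardinal.eq, hX, mk_ord_toType]
  set g : X → Ordinal.{0} := fun x => Ordinal.typein ((· < ·) : κ.ord.ToType → κ.ord.ToType → Prop) (e x) with hg
  have hg_lt : ∀ x, g x < κ.ord := fun x => by
    have := Ordinal.typein_lt_type ((· < ·) : κ.ord.ToType → κ.ord.ToType → Prop) (e x)
    rwa [Ordinal.type_toType] at this
  have hg_inj : Function.Injective g := fun a b h =>
    e.injective (Ordinal.typein_injective _ h)
  -- the piece of each point
  have htf : ∀ x : X, ∃ t, x ∈ P t := fun x => by
    have : x ∈ ⋃ t, P t := by rw [hcov]; trivial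
    simpa using this
  set tf : X → T := fun x => (htf x).choose with htfdef
  have htf_mem : ∀ x, x ∈ P (tf x) := fun x => (htf x).choose_spec
  have htf_eq : ∀ {x : X} {s : T}, x ∈ P s → tf x = s := by
    intro x s hx
    by_contra h
    exact Set.disjoint_left.mp (hdisj _ _ h) (htf_mem x) hx
  set ρ : T → Ordinal.{0} := fun t => IsWellFounded.rank (α := T) (· < ·) t with hρ
  set f : X → Ordinal.{0} := fun x => κ.ord * ρ (tf x) + g x with hf
  have key : ∀ x y : X, ρ (tf x) < ρ (tf y) → f x < f y := by
    intro x y h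
    calc f x < κ.ord * ρ (tf x) + κ.ord := add_lt_add_right (hg_lt x) _
      _ = κ.ord * (ρ (tf x) + 1) := by rw [mul_add, mul_one]
      _ ≤ κ.ord * ρ (tf y) := by
          apply mul_le_mul_right
          rw [Ordinal.add_one_eq_succ]
          exact Order.succ_le_of_lt h
      _ ≤ f y := le_self_add
  have hle : ∀ x y : X, f x ≤ f y → ρ (tf x) ≤ ρ (tf y) := by
    intro x y h
    by_contra hc
    exact absurd (key y x (lt_of_not_ge hc)) (not_lt.mpr h)
  have hf_inj : Function.Injective f := by
    intro a b h
    have h1 : ρ (tf a) = ρ (tf b) := le_antisymm (hle a b h.le) (hle b a h.ge)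
    have h2 : g a = g b := by
      have := h
      rw [hf] at this
      simp only [h1] at this
      exact add_left_cancel_iff.mp this
    exact hg_inj h2
  -- the well-order
  set r : X → X → Prop := fun a b => f a < f b with hr
  -- closedness of initial segments
  have hclosed : ∀ x : X, IsClosed {y | r y x} := by
    intro x
    rw [← isOpen_compl_iff]
    have hcompl : {y | r y x}ᶜ = {y | f x ≤ f y} := by
      ext y; simp [hr, not_lt]
    rw [hcompl, isOpen_iff_mem_nhds]
    intro z hz
    obtain ⟨U, hU, hU2⟩ := hS5 (tf z) z (htf_mem z)
    apply Filter.mem_of_superset hU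
    intro y hy
    rcases eq_or_ne y z with rfl | hne
    · exact hz
    · have hmem : y ∈ ⋃ t ∈ {t : T | tf z < t}, P t := hU2 ⟨hy, hne⟩
      simp only [Set.mem_iUnion, Set.mem_setOf_eq] at hmem
      obtain ⟨t, hst, hyt⟩ := hmem
      have hty : tf y = t := htf_eq hyt
      have h1 : ρ (tf x) ≤ ρ (tf z) := hle x z hz
      have h2 : ρ (tf z) < ρ (tf y) := by
        rw [hty]; exact IsWellFounded.rank_lt_of_rel hst
      exact le_of_lt (key x y (lt_of_le_of_lt h1 h2))
  -- bound on f
  set o : Ordinal.{0} := κ.ord * pordRank T with ho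
  have hbound : ∀ x, f x < o := by
    intro x
    have h1 : f x < κ.ord * (ρ (tf x) + 1) := by
      calc f x < κ.ord * ρ (tf x) + κ.ord := add_lt_add_right (hg_lt x) _
        _ = κ.ord * (ρ (tf x) + 1) := by rw [mul_add, mul_one]
    have h2 : ρ (tf x) + 1 ≤ pordRank T :=
      Ordinal.le_iSup (fun t : T => IsWellFounded.rank (α := T) (· < ·) t + 1) (tf x)
    exact lt_of_lt_of_le h1 (mul_le_mul_right h2 _)
  -- embed into o.ToType
  haveI := myWO o.ToType
  set F : X → o.ToType := fun x =>
    Ordinal.enum (α := o.ToType) (· < ·) ⟨f x, by rw [Ordinal.type_toType]; exact hbound x⟩ with hF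
  have hFiff : ∀ a b : X, F a < F b ↔ r a b := by
    intro a b
    rw [hF]
    rw [Ordinal.enum_lt_enum (r := ((· < ·) : o.ToType → o.ToType → Prop))]
    exact Subtype.mk_lt_mk
  have hF_inj : Function.Injective F := by
    intro a b h
    apply hf_inj
    by_contra hne
    rcases lt_or_gt_of_ne hne with h1 | h1
    · have := (hFiff a b).mpr h1
      rw [h] at this
      exact lt_irrefl _ this
    · have := (hFiff b a).mpr h1
      rw [h] at this
      exact lt_irrefl _ this
  set emb : r ↪r ((· < ·) : o.ToType → o.ToType → Prop) :=
    ⟨⟨F, hF_inj⟩, fun {a b} => hFiff a b⟩ with hemb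
  haveI hwo : IsWellOrder X r := emb.isWellOrder
  have htype : Ordinal.type r ≤ o := by
    rw [← Ordinal.type_toType o]
    exact emb.ordinal_type_le
  have hmem : IsLeftSepType X (Ordinal.type r) := ⟨r, hwo, hclosed, rfl⟩
  exact ⟨⟨_, hmem⟩, le_trans (csInf_le' hmem) htype⟩
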